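/- Theorem (Tasaki-type second law for open processes): let Φ(ρ) := Tr_A[U(ρ ⊗ ρ_A)U†] with U unitary on S⊗A and ρ_A a density matrix on a d_A-dimensional ancilla, and let Γ be the Gibbs state of Hamiltonian H on S at inverse temperature β. Then the energy drop Δ_drop := Tr[ΓH] − Tr[Φ(Γ)H] satisfies Δ_drop ≤ β⁻¹ log d_A. -/

import Mathlib

open scoped Matrix ComplexOrder
variable {n : Type*} [Fintype n] [DecidableEq n]

/-- Apply a real function to a Hermitian matrix via its spectral decomposition. -/
noncomputable def matFun (f : ℝ → ℝ) (A : Matrix n n ℂ) : Matrix n n ℂ :=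
  if hA : A.IsHermitian then
    (hA.eigenvectorUnitary : Matrix n n ℂ) *
      Matrix.diagonal (fun i => (f (hA.eigenvalues i) : ℂ)) *
      (star (hA.eigenvectorUnitary : Matrix n n ℂ))
  else 0

/-- Matrix logarithm. -/
noncomputable def mlog (A : Matrix n n ℂ) : Matrix n n ℂ := matFun Real.log A

/-- Matrix square root. -/
noncomputable def msqrt (A : Matrix n n ℂ) : Matrix n n ℂ := matFun Real.sqrt A

/-- Umegaki relative entropy `D(X‖Y) = Tr[X log X − X log Y]`. -/
noncomputable def relEnt (X Y : Matrix n n ℂ) : ℝ :=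
  (Matrix.trace (X * mlog X) - Matrix.trace (X * mlog Y)).re

/-- Quantum fidelity `F(ρ,σ) = Tr|√ρ√σ|`. -/
noncomputable def fidelity (ρ σ : Matrix n n ℂ) : ℝ :=
  (Matrix.trace (msqrt ((msqrt ρ * msqrt σ)ᴴ * (msqrt ρ * msqrt σ)))).re

/-- Gibbs state `exp(−βH)/Tr exp(−βH)`. -/
noncomputable def gibbs (β : ℝ) (H : Matrix n n ℂ) : Matrix n n ℂ :=
  ((Matrix.trace (matFun Real.exp ((-β) • H))).re)⁻¹ • matFun Real.exp ((-β) • H)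

/-- Equilibrium free energy `−β⁻¹ log Tr exp(−βH)`. -/
noncomputable def freeEnergy (β : ℝ) (H : Matrix n n ℂ) : ℝ :=
  -(β⁻¹ * Real.log ((Matrix.trace (matFun Real.exp ((-β) • H))).re))

/-- A density matrix: positive semidefinite with unit trace. -/
def IsDensity (ρ : Matrix n n ℂ) : Prop := ρ.PosSemidef ∧ ρ.trace = 1

/-- Trace-preserving map. -/
def IsTP (Φ : Matrix n n ℂ → Matrix n n ℂ) : Prop := ∀ X, (Φ X).trace = X.trace

/-- Complete positivity: every ampliation `Φ ⊗ id_m` maps positive semidefinite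
matrices to positive semidefinite matrices. -/
def IsCompletelyPositive (Φ : Matrix n n ℂ → Matrix n n ℂ) : Prop :=
  ∀ (m : ℕ) (M : Matrix (n × Fin m) (n × Fin m) ℂ), M.PosSemidef →
    (Matrix.of fun (p q : n × Fin m) => Φ (Matrix.of fun a b => M (a, p.2) (b, q.2)) p.1 q.1).PosSemidef

/-- CPTP: linear, completely positive, trace-preserving. -/
def IsCPTP (Φ : Matrix n n ℂ → Matrix n n ℂ) : Prop :=
  IsLinearMap ℂ Φ ∧ IsCompletelyPositive Φ ∧ IsTP Φ

/-- `Φd` is the trace-dual (Hilbert–Schmidt adjoint) of `Φ`: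
`Tr[Φ(X) Y] = Tr[X Φ†(Y)]` for all `X, Y`. -/
def IsTraceDual (Φ Φd : Matrix n n ℂ → Matrix n n ℂ) : Prop :=
  ∀ X Y, (Φ X * Y).trace = (X * Φd Y).trace

open scoped Kronecker

/-- Partial trace over the ancilla factor. -/
noncomputable def ptraceA {s a : Type*} [Fintype s] [Fintype a]
    (M : Matrix (s × a) (s × a) ℂ) : Matrix s s ℂ :=
  Matrix.of fun i j => ∑ k, M (i, k) (j, k)

section helpers
set_option linter.unusedSectionVars false

variable {s a : Type*} [Fintype s] [DecidableEq s] [Fintype a] [DecidableEq a]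

lemma matFun_of_isHermitian (f : ℝ → ℝ) {A : Matrix s s ℂ} (hA : A.IsHermitian) :
    matFun f A = (hA.eigenvectorUnitary : Matrix s s ℂ) *
      Matrix.diagonal (fun i => (f (hA.eigenvalues i) : ℂ)) *
      (star (hA.eigenvectorUnitary : Matrix s s ℂ)) := dif_pos hA

lemma kron_conjTranspose (A : Matrix s s ℂ) (B : Matrix a a ℂ) :
    (A ⊗ₖ B)ᴴ = Aᴴ ⊗ₖ Bᴴ := by
  ext ⟨i, k⟩ ⟨j, l⟩
  simp [Matrix.conjTranspose_apply, mul_comm]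

lemma posSemidef_kron {A : Matrix s s ℂ} {B : Matrix a a ℂ}
    (hA : A.PosSemidef) (hB : B.PosSemidef) : (A ⊗ₖ B).PosSemidef := by
  exact hA.kronecker hB

lemma sum_kron {ι : Type*} (t : Finset ι) (f : ι → Matrix s s ℂ) (B : Matrix a a ℂ) :
    (∑ i ∈ t, f i) ⊗ₖ B = ∑ i ∈ t, (f i) ⊗ₖ B := by
  ext ⟨i, k⟩ ⟨j, l⟩
  simp [Matrix.sum_apply, Finset.sum_mul]

lemma ptraceA_sub (M N : Matrix (s × a) (s × a) ℂ) :
    ptraceA (M - N) = ptraceA M - ptraceA N := by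
  ext i j; simp [ptraceA, Finset.sum_sub_distrib]

lemma ptraceA_smul (c : ℂ) (M : Matrix (s × a) (s × a) ℂ) :
    ptraceA (c • M) = c • ptraceA M := by
  ext i j; simp [ptraceA, Finset.mul_sum]

lemma ptraceA_sum {ι : Type*} (t : Finset ι) (f : ι → Matrix (s × a) (s × a) ℂ) :
    ptraceA (∑ i ∈ t, f i) = ∑ i ∈ t, ptraceA (f i) := by
  ext i j
  simp only [ptraceA, Matrix.of_apply, Matrix.sum_apply]
  rw [Finset.sum_comm]

lemma trace_ptraceA (M : Matrix (s × a) (s × a) ℂ) :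
    (ptraceA M).trace = M.trace := by
  simp [ptraceA, Matrix.trace, Matrix.diag, Fintype.sum_prod_type]

lemma ptraceA_one :
    ptraceA (1 : Matrix (s × a) (s × a) ℂ) = (Fintype.card a : ℂ) • 1 := by
  ext i j
  by_cases h : i = j <;>
    simp [ptraceA, Matrix.one_apply, Prod.ext_iff, h, Finset.card_univ]

set_option maxHeartbeats 1000000 in
lemma posSemidef_ptraceA {M : Matrix (s × a) (s × a) ℂ}
    (hM : M.PosSemidef) : (ptraceA M).PosSemidef := by
  have key : ptraceA M = ∑ k : a,
      (Matrix.of fun (i : s) (p : s × a) => if p = (i, k) then (1 : ℂ) else 0) * M *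
      (Matrix.of fun (i : s) (p : s × a) => if p = (i, k) then (1 : ℂ) else 0)ᴴ := by
    ext i j
    simp only [ptraceA, Matrix.of_apply, Matrix.sum_apply, Matrix.mul_apply,
      Matrix.conjTranspose_apply, Matrix.of_apply]
    refine Finset.sum_congr rfl fun k _ => ?_
    simp [ite_mul, mul_ite, apply_ite (star : ℂ → ℂ), Finset.sum_ite_eq, Finset.sum_ite_eq']
  rw [key]
  apply Finset.sum_induction _ _ (fun A B hA hB => hA.add hB) Matrix.PosSemidef.zero
  exact fun k _ => hM.mul_mul_conjTranspose_same _

lemma trace_conj' {V X : Matrix s s ℂ} (h : star V * V = 1) :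
    (V * X * star V).trace = X.trace := by
  rw [Matrix.trace_mul_cycle, h, Matrix.one_mul]

lemma conj_mul_conj {V : Matrix s s ℂ} (X Y : Matrix s s ℂ) (h : star V * V = 1) :
    (V * X * star V) * (V * Y * star V) = V * (X * Y) * star V := by
  simp only [Matrix.mul_assoc]
  rw [← Matrix.mul_assoc (star V) V (Y * star V), h, Matrix.one_mul]

lemma diag_re_nonneg {P : Matrix s s ℂ} (hP : P.PosSemidef) (i : s) :
    0 ≤ (P i i).re := by
  have h := hP.dotProduct_mulVec_nonneg (Pi.single i 1)
  have h2 : dotProduct (star (Pi.single i 1)) (P *ᵥ Pi.single i 1) = P i i := by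
    simp [dotProduct, Matrix.mulVec, Pi.single_apply, apply_ite (star : ℂ → ℂ),
      ite_mul, mul_ite, Finset.sum_ite_eq, Finset.sum_ite_eq']
  rw [h2] at h
  exact (Complex.le_def.mp h).1

lemma one_sub_density_posSemidef {ρ : Matrix s s ℂ} (h1 : ρ.PosSemidef)
    (h2 : ρ.trace = 1) : ((1 : Matrix s s ℂ) - ρ).PosSemidef := by
  have hherm := h1.1
  set V : Matrix s s ℂ := (hherm.eigenvectorUnitary : Matrix s s ℂ) with hV
  have hV1 : star V * V = 1 :=
    (Matrix.mem_unitaryGroup_iff').mp hherm.eigenvectorUnitary.2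
  have hV2 : V * star V = 1 :=
    (Matrix.mem_unitaryGroup_iff).mp hherm.eigenvectorUnitary.2
  have hspec := hherm.spectral_theorem
  rw [Unitary.conjStarAlgAut_apply] at hspec
  have hsum : ∑ i, hherm.eigenvalues i = 1 := by
    have h3 : ρ.trace = ∑ i, (hherm.eigenvalues i : ℂ) := by
      conv_lhs => rw [hspec]
      rw [trace_conj' hV1, Matrix.trace_diagonal]
      simp
    rw [h2] at h3
    exact_mod_cast h3.symm
  have hle : ∀ i, hherm.eigenvalues i ≤ 1 := by
    intro i
    calc hherm.eigenvalues i ≤ ∑ j, hherm.eigenvalues j :=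
          Finset.single_le_sum (fun j _ => h1.eigenvalues_nonneg j) (Finset.mem_univ i)
      _ = 1 := hsum
  have key : (1 : Matrix s s ℂ) - ρ =
      V * Matrix.diagonal (fun i => (1 - hherm.eigenvalues i : ℝ) • (1 : ℂ)) * star V := by
    have hd : Matrix.diagonal (fun i => (1 - hherm.eigenvalues i : ℝ) • (1 : ℂ)) =
        1 - Matrix.diagonal (RCLike.ofReal ∘ hherm.eigenvalues) := by
      rw [← Matrix.diagonal_one, Matrix.diagonal_sub]
      ext i
      simp [Complex.real_smul]
    rw [hd, Matrix.mul_sub, Matrix.mul_one, Matrix.sub_mul, hV2, ← hspec]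
  rw [key]
  refine (Matrix.posSemidef_diagonal_iff.mpr fun i => ?_).mul_mul_conjTranspose_same V
  rw [Complex.real_smul, mul_one, Complex.zero_le_real]
  linarith [hle i]

end helpers

/-- Tasaki-type second law: for `Φ(ρ) = Tr_A[U(ρ ⊗ ρ_A)U†]`
and the Gibbs state `Γ` of `H` at inverse temperature `β`, the energy drop
satisfies `Δ_drop ≤ β⁻¹ log d_A`. -/
theorem stmt16_tasaki_second_law {s a : Type*}
    [Fintype s] [DecidableEq s] [Fintype a] [DecidableEq a]
    (U : Matrix (s × a) (s × a) ℂ) (hU₁ : Uᴴ * U = 1) (hU₂ : U * Uᴴ = 1)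
    (ρA : Matrix a a ℂ) (hρA : IsDensity ρA)
    (Φ : Matrix s s ℂ → Matrix s s ℂ)
    (hΦ : ∀ ρ, Φ ρ = ptraceA (U * (ρ ⊗ₖ ρA) * Uᴴ))
    (β : ℝ) (hβ : 0 < β) (H : Matrix s s ℂ) (hH : H.IsHermitian) :
    (Matrix.trace (gibbs β H * H)).re - (Matrix.trace (Φ (gibbs β H) * H)).re
      ≤ β⁻¹ * Real.log (Fintype.card a) := by
  classical
  -- the ancilla is nonempty
  have ha : Nonempty a := by
    by_contra h
    rw [not_nonempty_iff] at h
    have := hρA.2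
    simp [Matrix.trace, Finset.univ_eq_empty] at this
  have hcard1 : (1 : ℝ) ≤ (Fintype.card a : ℝ) := by exact_mod_cast Fintype.card_pos
  have hlogcard : 0 ≤ Real.log (Fintype.card a) := Real.log_nonneg hcard1
  by_cases hs : Nonempty s
  case neg =>
    rw [not_nonempty_iff] at hs
    have h1 : (Matrix.trace (gibbs β H * H)) = 0 := by
      simp [Matrix.trace, Finset.univ_eq_empty]
    have h2 : (Matrix.trace (Φ (gibbs β H) * H)) = 0 := by
      simp [Matrix.trace, Finset.univ_eq_empty]
    rw [h1, h2]
    simp only [Complex.zero_re, sub_zero]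
    positivity
  case pos =>
  have hU₁' : star U * U = 1 := by rw [Matrix.star_eq_conjTranspose]; exact hU₁
  -- spectral data of A = (-β) • H
  have hA : ((-β) • H : Matrix s s ℂ).IsHermitian := by
    ext i j
    simp only [Matrix.conjTranspose_apply, Matrix.smul_apply, star_smul, star_trivial]
    rw [← Matrix.conjTranspose_apply, hH.eq]
  set V : Matrix s s ℂ := (hA.eigenvectorUnitary : Matrix s s ℂ) with hVdef
  set μ : s → ℝ := hA.eigenvalues with hμdef
  have hV1 : star V * V = 1 :=
    (Matrix.mem_unitaryGroup_iff').mp hA.eigenvectorUnitary.2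
  have hV2 : V * star V = 1 :=
    (Matrix.mem_unitaryGroup_iff).mp hA.eigenvectorUnitary.2
  have hspec : ((-β) • H : Matrix s s ℂ) =
      V * Matrix.diagonal (fun i => (μ i : ℂ)) * star V := by
    convert hA.spectral_theorem using 2
    rw [Unitary.conjStarAlgAut_apply]
    rfl
  set Z : ℝ := ∑ i, Real.exp (μ i) with hZdef
  have hZpos : 0 < Z := Finset.sum_pos (fun i _ => Real.exp_pos _) Finset.univ_nonempty
  set p : s → ℝ := fun i => Real.exp (μ i) / Z with hpdef
  have hp_pos : ∀ i, 0 < p i := fun i => div_pos (Real.exp_pos _) hZpos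
  have hp_sum : ∑ i, p i = 1 := by
    rw [hpdef, ← Finset.sum_div, ← hZdef, div_self hZpos.ne']
  have hlogp : ∀ i, Real.log (p i) = μ i - Real.log Z := by
    intro i
    rw [hpdef, Real.log_div (Real.exp_ne_zero _) hZpos.ne', Real.log_exp]
  have hmatfun : matFun Real.exp ((-β) • H) =
      V * Matrix.diagonal (fun i => (Real.exp (μ i) : ℂ)) * star V :=
    matFun_of_isHermitian Real.exp hA
  have hZre : (Matrix.trace (matFun Real.exp ((-β) • H))).re = Z := by
    rw [hmatfun, trace_conj' hV1, Matrix.trace_diagonal, hZdef, Complex.re_sum]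
    exact Finset.sum_congr rfl fun i _ => Complex.ofReal_re _
  -- Gibbs state
  have hΓ : gibbs β H = V * Matrix.diagonal (fun i => (p i : ℂ)) * star V := by
    rw [gibbs, hZre, hmatfun, ← Matrix.smul_mul, ← Matrix.mul_smul]
    congr 2
    ext i j
    rcases eq_or_ne i j with rfl | h
    · simp [Matrix.diagonal_apply_eq, Complex.real_smul, hpdef, div_eq_inv_mul]
    · simp [Matrix.diagonal_apply_ne _ h]
  -- H in the eigenbasis
  set E : s → ℝ := fun i => (-β)⁻¹ * μ i with hEdef
  have hH' : H = V * Matrix.diagonal (fun i => (E i : ℂ)) * star V := by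
    have h0 : H = ((-β)⁻¹ : ℝ) • ((-β) • H : Matrix s s ℂ) := by
      rw [smul_smul, inv_mul_cancel₀ (neg_ne_zero.mpr hβ.ne'), one_smul]
    rw [h0, hspec, ← Matrix.smul_mul, ← Matrix.mul_smul]
    congr 2
    ext i j
    rcases eq_or_ne i j with rfl | h
    · simp [Matrix.diagonal_apply_eq, Complex.real_smul, hEdef]
    · simp [Matrix.diagonal_apply_ne _ h]
  -- rank-one pieces
  set B : s → Matrix s s ℂ :=
    fun j => V * Matrix.diagonal (Pi.single j (1 : ℂ)) * star V with hBdef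
  have hDsum : ∑ j : s, Matrix.diagonal (Pi.single j (1 : ℂ)) = 1 := by
    ext i k
    rcases eq_or_ne i k with rfl | h
    · simp [Matrix.sum_apply, Matrix.diagonal_apply_eq, Pi.single_apply]
    · simp [Matrix.sum_apply, Matrix.diagonal_apply_ne _ h, Matrix.one_apply_ne h]
  have hBsum : ∑ j : s, B j = 1 := by
    rw [hBdef, ← Finset.sum_mul, ← Finset.mul_sum, hDsum, Matrix.mul_one, hV2]
  have hΓdecomp : gibbs β H = ∑ j : s, (p j : ℂ) • B j := by
    rw [hΓ, hBdef]
    have hD : Matrix.diagonal (fun i => (p i : ℂ)) =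
        ∑ j : s, (p j : ℂ) • Matrix.diagonal (Pi.single j (1 : ℂ)) := by
      ext i k
      rcases eq_or_ne i k with rfl | h
      · simp [Matrix.sum_apply, Matrix.diagonal_apply_eq, Pi.single_apply, mul_ite,
          Finset.sum_ite_eq]
      · simp [Matrix.sum_apply, Matrix.diagonal_apply_ne _ h]
    rw [hD, Finset.mul_sum, Finset.sum_mul]
    exact Finset.sum_congr rfl fun j _ => by rw [Matrix.mul_smul, Matrix.smul_mul]
  -- the channel applied to the pieces
  set N : s → Matrix s s ℂ :=
    fun j => ptraceA (U * ((B j) ⊗ₖ ρA) * Uᴴ) with hNdef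
  have hΦΓ : Φ (gibbs β H) = ∑ j : s, (p j : ℂ) • N j := by
    rw [hΦ, hΓdecomp, sum_kron]
    rw [show (∑ j : s, ((p j : ℂ) • B j) ⊗ₖ ρA) = ∑ j : s, (p j : ℂ) • (B j ⊗ₖ ρA) from
      Finset.sum_congr rfl fun j _ => by rw [Matrix.smul_kronecker]]
    rw [Finset.mul_sum, Finset.sum_mul, ptraceA_sum]
    exact Finset.sum_congr rfl fun j _ => by
      rw [Matrix.mul_smul, Matrix.smul_mul, ptraceA_smul]
  have hNsum : ∑ j : s, N j = ptraceA (U * ((1 : Matrix s s ℂ) ⊗ₖ ρA) * Uᴴ) := by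
    rw [hNdef, ← hBsum, sum_kron, Finset.mul_sum, Finset.sum_mul, ptraceA_sum]
  -- positivity of the pieces
  have hB_psd : ∀ j, (B j).PosSemidef := by
    intro j
    have hd : (Matrix.diagonal (Pi.single j (1 : ℂ))).PosSemidef := by
      refine Matrix.posSemidef_diagonal_iff.mpr fun i => ?_
      rcases eq_or_ne i j with rfl | h
      · simp [Pi.single_apply]
      · simp [Pi.single_apply, h]
    have := hd.mul_mul_conjTranspose_same V
    rwa [← Matrix.star_eq_conjTranspose] at this
  have hN_psd : ∀ j, (N j).PosSemidef := fun j =>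
    posSemidef_ptraceA ((posSemidef_kron (hB_psd j) hρA.1).mul_mul_conjTranspose_same U)
  -- transition coefficients
  set T : s → s → ℝ := fun i j => ((star V * N j * V) i i).re with hTdef
  have hT_nonneg : ∀ i j, 0 ≤ T i j := by
    intro i j
    have := (hN_psd j).conjTranspose_mul_mul_same V
    rw [← Matrix.star_eq_conjTranspose] at this
    exact diag_re_nonneg this i
  have htraceN : ∀ j, (N j).trace = 1 := by
    intro j
    rw [hNdef]
    rw [trace_ptraceA, ← Matrix.star_eq_conjTranspose, trace_conj' hU₁',
      Matrix.trace_kronecker, hρA.2, mul_one, hBdef, trace_conj' hV1,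
      Matrix.trace_diagonal]
    simp [Pi.single_apply]
  have hT_col : ∀ j, ∑ i, T i j = 1 := by
    intro j
    have h1 : (star V * N j * V).trace = (N j).trace := by
      rw [Matrix.trace_mul_cycle, hV2, Matrix.one_mul]
    have h2 : ∑ i, T i j = ((star V * N j * V).trace).re := by
      rw [Matrix.trace, Complex.re_sum]; rfl
    rw [h2, h1, htraceN j]
    simp
  -- the output weights
  set q : s → ℝ := fun i => ((star V * Φ (gibbs β H) * V) i i).re with hqdef
  have hq_eq : ∀ i, q i = ∑ j, p j * T i j := by
    intro i
    rw [hqdef]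
    simp only
    rw [hΦΓ, Finset.mul_sum, Finset.sum_mul]
    rw [show (∑ j : s, star V * ((p j : ℂ) • N j) * V) =
        ∑ j : s, (p j : ℂ) • (star V * N j * V) from
      Finset.sum_congr rfl fun j _ => by rw [Matrix.mul_smul, Matrix.smul_mul]]
    rw [Matrix.sum_apply, Complex.re_sum]
    exact Finset.sum_congr rfl fun j _ => by
      rw [Matrix.smul_apply, smul_eq_mul, Complex.re_ofReal_mul]
  -- energy traces
  have htr1 : (Matrix.trace (gibbs β H * H)).re = ∑ i, p i * E i := by
    rw [hΓ]
    conv_lhs => rw [hH']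
    rw [conj_mul_conj _ _ hV1, trace_conj' hV1, Matrix.diagonal_mul_diagonal,
      Matrix.trace_diagonal, Complex.re_sum]
    exact Finset.sum_congr rfl fun i _ => by
      rw [← Complex.ofReal_mul, Complex.ofReal_re]
  have hgen : ∀ X : Matrix s s ℂ,
      (Matrix.trace (X * H)).re = ∑ i, ((star V * X * V) i i).re * E i := by
    intro X
    conv_lhs => rw [hH']
    have hcyc : (X * (V * Matrix.diagonal (fun i => (E i : ℂ)) * star V)).trace
        = (Matrix.diagonal (fun i => (E i : ℂ)) * (star V * X * V)).trace := by
      rw [show X * (V * Matrix.diagonal (fun i => (E i : ℂ)) * star V)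
          = (X * V) * Matrix.diagonal (fun i => (E i : ℂ)) * star V by
        simp only [Matrix.mul_assoc]]
      rw [Matrix.trace_mul_cycle, Matrix.trace_mul_comm]
      congr 1
      simp only [Matrix.mul_assoc]
    rw [hcyc, Matrix.trace, Complex.re_sum]
    refine Finset.sum_congr rfl fun i _ => ?_
    rw [Matrix.diag, Matrix.diagonal_mul, Complex.re_ofReal_mul]
    ring
  have htr2 : (Matrix.trace (Φ (gibbs β H) * H)).re = ∑ i, q i * E i := hgen _
  rw [htr1, htr2]
  -- row sums bounded by the ancilla dimension
  set W : Matrix s s ℂ := ptraceA (U * ((1 : Matrix s s ℂ) ⊗ₖ ρA) * Uᴴ) with hWdef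
  have hR_le : ∀ i, ∑ j, T i j ≤ (Fintype.card a : ℝ) := by
    intro i
    have hmat : star V * (∑ j : s, N j) * V = ∑ j : s, star V * N j * V := by
      rw [Finset.mul_sum, Finset.sum_mul]
    have h4 : ∑ j, T i j = ((star V * W * V) i i).re := by
      rw [hTdef]
      simp only
      rw [← Complex.re_sum]
      congr 1
      rw [show (∑ j : s, ((star V * N j * V) i i)) = ((∑ j : s, star V * N j * V) i i) from
        (Matrix.sum_apply i i _ _).symm]
      rw [← hmat, hNsum]
    have hk : (1 : Matrix s s ℂ) ⊗ₖ ((1 : Matrix a a ℂ) - ρA)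
        = (1 : Matrix (s × a) (s × a) ℂ) - (1 : Matrix s s ℂ) ⊗ₖ ρA := by
      ext ⟨i', k⟩ ⟨j', l⟩
      simp only [Matrix.kroneckerMap_apply, Matrix.sub_apply, Matrix.one_apply,
        Prod.ext_iff, mul_sub]
      rcases eq_or_ne i' j' with rfl | h
      · simp
      · simp [h]
    have h2' : (Fintype.card a : ℂ) • (1 : Matrix s s ℂ) - W =
        ptraceA (U * ((1 : Matrix s s ℂ) ⊗ₖ ((1 : Matrix a a ℂ) - ρA)) * Uᴴ) := by
      rw [hk, Matrix.mul_sub, Matrix.sub_mul, Matrix.mul_one, hU₂, ptraceA_sub, ptraceA_one,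
        hWdef]
    have h3' : ((Fintype.card a : ℂ) • (1 : Matrix s s ℂ) - W).PosSemidef := by
      rw [h2']
      exact posSemidef_ptraceA
        ((posSemidef_kron Matrix.PosSemidef.one
          (one_sub_density_posSemidef hρA.1 hρA.2)).mul_mul_conjTranspose_same U)
    have h5' : ((Fintype.card a : ℂ) • (1 : Matrix s s ℂ) - star V * W * V).PosSemidef := by
      have hconj : star V * ((Fintype.card a : ℂ) • (1 : Matrix s s ℂ) - W) * V
          = (Fintype.card a : ℂ) • (1 : Matrix s s ℂ) - star V * W * V := by
        rw [Matrix.mul_sub, Matrix.sub_mul]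
        congr 1
        rw [Matrix.mul_smul, Matrix.mul_one, Matrix.smul_mul, hV1]
      rw [← hconj]
      have := h3'.conjTranspose_mul_mul_same V
      rwa [← Matrix.star_eq_conjTranspose] at this
    have h6 := diag_re_nonneg h5' i
    rw [Matrix.sub_apply, Matrix.smul_apply, Matrix.one_apply_eq, smul_eq_mul, mul_one,
      Complex.sub_re, Complex.natCast_re] at h6
    rw [h4]
    linarith
  -- sums of q
  have hq_sum : ∑ i, q i = 1 := by
    rw [show (∑ i, q i) = ∑ i, ∑ j, p j * T i j from Finset.sum_congr rfl fun i _ => hq_eq i]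
    rw [Finset.sum_comm]
    rw [show (∑ j : s, ∑ i : s, p j * T i j) = ∑ j : s, p j * ∑ i, T i j from
      Finset.sum_congr rfl fun j _ => (Finset.mul_sum _ _ _).symm]
    simp only [hT_col, mul_one, hp_sum]
  -- Jensen's inequality setup
  set w : s × s → ℝ := fun x => T x.1 x.2 * p x.2 with hwdef
  have hw_nonneg : ∀ x : s × s, 0 ≤ w x :=
    fun x => mul_nonneg (hT_nonneg _ _) (hp_pos _).le
  have hw_sum : ∑ x : s × s, w x = 1 := by
    rw [Fintype.sum_prod_type, Finset.sum_comm]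
    rw [show (∑ j : s, ∑ i : s, w (i, j)) = ∑ j : s, (∑ i, T i j) * p j from
      Finset.sum_congr rfl fun j _ => by rw [Finset.sum_mul]]
    simp only [hT_col, one_mul, hp_sum]
  set Sv : ℝ := ∑ x : s × s, w x * (p x.1 / p x.2) with hSvdef
  have hSv_eq : Sv = ∑ i, (∑ j, T i j) * p i := by
    rw [hSvdef, Fintype.sum_prod_type]
    refine Finset.sum_congr rfl fun i _ => ?_
    rw [Finset.sum_mul]
    refine Finset.sum_congr rfl fun j _ => ?_
    rw [hwdef]
    field_simp
    rw [mul_right_comm _ (p j), mul_div_assoc, div_self (hp_pos j).ne', mul_one]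
  have hSv_le : Sv ≤ (Fintype.card a : ℝ) := by
    rw [hSv_eq]
    calc ∑ i, (∑ j, T i j) * p i ≤ ∑ i, (Fintype.card a : ℝ) * p i := by
          refine Finset.sum_le_sum fun i _ => ?_
          exact mul_le_mul_of_nonneg_right (hR_le i) (hp_pos i).le
      _ = (Fintype.card a : ℝ) := by rw [← Finset.mul_sum, hp_sum, mul_one]
  have hSv_pos : 0 < Sv := by
    obtain ⟨x0, hx0⟩ : ∃ x : s × s, 0 < w x := by
      by_contra hcon
      push_neg at hcon
      have : (∑ x : s × s, w x) ≤ 0 := Finset.sum_nonpos fun x _ => hcon x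
      rw [hw_sum] at this; linarith
    refine Finset.sum_pos' (fun x _ => mul_nonneg (hw_nonneg x)
      (div_nonneg (hp_pos _).le (hp_pos _).le)) ⟨x0, Finset.mem_univ _, ?_⟩
    exact mul_pos hx0 (div_pos (hp_pos _) (hp_pos _))
  have hJensen : ∑ x : s × s, w x * Real.log (p x.1 / p x.2) ≤ Real.log Sv := by
    have hcc : ConcaveOn ℝ (Set.Ioi 0) Real.log := strictConcaveOn_log_Ioi.concaveOn
    have := hcc.le_map_sum (t := Finset.univ) (w := w) (p := fun x : s × s => p x.1 / p x.2)
      (fun x _ => hw_nonneg x) hw_sum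
      (fun x _ => Set.mem_Ioi.mpr (div_pos (hp_pos _) (hp_pos _)))
    simpa [smul_eq_mul, hSvdef] using this
  have hlogS : Real.log Sv ≤ Real.log (Fintype.card a) :=
    Real.log_le_log hSv_pos hSv_le
  -- final algebra
  have key2 : ∑ i, q i * Real.log (p i) - ∑ i, p i * Real.log (p i)
      = ∑ x : s × s, w x * Real.log (p x.1 / p x.2) := by
    have e1 : ∑ i, q i * Real.log (p i) = ∑ x : s × s, w x * Real.log (p x.1) := by
      rw [Fintype.sum_prod_type]
      refine Finset.sum_congr rfl fun i _ => ?_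
      rw [hq_eq i, Finset.sum_mul]
      exact Finset.sum_congr rfl fun j _ => by rw [hwdef]; ring
    have e2 : ∑ i, p i * Real.log (p i) = ∑ x : s × s, w x * Real.log (p x.2) := by
      rw [Fintype.sum_prod_type, Finset.sum_comm]
      refine Finset.sum_congr rfl fun j _ => ?_
      rw [show (∑ i : s, w (i, j) * Real.log (p j)) = (∑ i, T i j) * (p j * Real.log (p j)) by
        rw [Finset.sum_mul]; exact Finset.sum_congr rfl fun i _ => by rw [hwdef]; ring]
      rw [hT_col, one_mul]
    rw [e1, e2, ← Finset.sum_sub_distrib]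
    refine Finset.sum_congr rfl fun x _ => ?_
    rw [Real.log_div (hp_pos _).ne' (hp_pos _).ne']
    ring
  have key1 : ∑ i, p i * E i - ∑ i, q i * E i
      = β⁻¹ * (∑ i, q i * Real.log (p i) - ∑ i, p i * Real.log (p i)) := by
    have hE : ∀ i, E i = (-β)⁻¹ * (Real.log (p i) + Real.log Z) := by
      intro i
      rw [hEdef]
      simp only
      rw [hlogp i]
      ring
    have lhs_eq : ∑ i, p i * E i - ∑ i, q i * E i
        = (-β)⁻¹ * ((∑ i, (p i - q i) * Real.log (p i))
            + (∑ i, (p i - q i)) * Real.log Z) := by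
      rw [← Finset.sum_sub_distrib, Finset.sum_mul, ← Finset.sum_add_distrib,
        Finset.mul_sum]
      refine Finset.sum_congr rfl fun i _ => ?_
      rw [hE i]; ring
    rw [lhs_eq, Finset.sum_sub_distrib, hp_sum, hq_sum, sub_self, zero_mul, add_zero,
      inv_neg]
    rw [← Finset.sum_sub_distrib, Finset.mul_sum, Finset.mul_sum]
    exact Finset.sum_congr rfl fun i _ => by ring
  rw [key1, key2]
  calc β⁻¹ * (∑ x : s × s, w x * Real.log (p x.1 / p x.2)) ≤ β⁻¹ * Real.log Sv :=
        mul_le_mul_of_nonneg_left hJensen (inv_nonneg.mpr hβ.le)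
    _ ≤ β⁻¹ * Real.log (Fintype.card a) :=
        mul_le_mul_of_nonneg_left hlogS (inv_nonneg.mpr hβ.le)
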